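/- Let g₁,…,gₙ : ℝ → ℝ be continuous, β₀ ∈ ℝ, f(x) = step(β₀ + Σᵢgᵢ(xᵢ)) with f(x)=1, and Δᵢ = gᵢ(xᵢ) − min_{|t−xᵢ|≤ε}gᵢ(t), reindexed so Δ₁ ≥ ⋯ ≥ Δₙ. Let k* be the least k such that the prefix {1,…,k} is sufficient for ⟨f,x,ε⟩ (k* exists since {1,…,n} is sufficient). Then {1,…,k*} is a cardinally-minimal sufficient explanation: no sufficient explanation has cardinality less than k*. -/

import Mathlib

/-- The vector equal to `x` on coordinates in `S` and equal to `x̃` on the complement. -/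
def patch {n : ℕ} (S : Finset (Fin n)) (x xt : Fin n → ℝ) : Fin n → ℝ :=
  fun i => if i ∈ S then x i else xt i

/-- `S` is a sufficient explanation for `⟨f, x, ε⟩` w.r.t. the ℓ∞ ball of radius ε. -/
def Sufficient {n : ℕ} (f : (Fin n → ℝ) → Fin 2) (x : Fin n → ℝ) (ε : ℝ)
    (S : Finset (Fin n)) : Prop :=
  ∀ xt : Fin n → ℝ, (∀ i, |x i - xt i| ≤ ε) → f (patch S x xt) = f x

/-- The prefix set `{1,…,k}` of the features (0-indexed: indices `< k`). -/
def prefixSet (n k : ℕ) : Finset (Fin n) :=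
  Finset.univ.filter (fun i : Fin n => (i : ℕ) < k)

lemma aux_strictMono_le {k n : ℕ} {f : Fin k → Fin n} (hf : StrictMono f) :
    ∀ j : Fin k, (j : ℕ) ≤ (f j : ℕ) := by
  intro j
  obtain ⟨j, hj⟩ := j
  induction j with
  | zero => exact Nat.zero_le _
  | succ i ih =>
    have hi : i < k := Nat.lt_of_succ_lt hj
    have h1 := ih hi
    have h2 : f ⟨i, hi⟩ < f ⟨i + 1, hj⟩ := hf (by simp [Fin.lt_def])
    rw [Fin.lt_def] at h2
    simp only [Fin.val_mk] at h1 h2 ⊢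
    omega

/-- If `k*` is the least `k` such that the top-`k` prefix (features sorted by descending
importance) is sufficient, then `{1,…,k*}` is a cardinally-minimal sufficient explanation:
every sufficient explanation has cardinality at least `k*`. -/
theorem stmt6 {n : ℕ} (g : Fin n → ℝ → ℝ) (β₀ : ℝ) (x : Fin n → ℝ) (ε : ℝ) (hε : 0 < ε)
    (hg : ∀ i, Continuous (g i)) (m : Fin n → ℝ)
    (hm : ∀ i, IsLeast (g i '' Set.Icc (x i - ε) (x i + ε)) (m i))
    (f : (Fin n → ℝ) → Fin 2)
    (hf : ∀ y, f y = if 0 ≤ β₀ + ∑ i, g i (y i) then 1 else 0)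
    (hfx : f x = 1)
    (hsorted : ∀ i j : Fin n, i ≤ j → g j (x j) - m j ≤ g i (x i) - m i)
    (kstar : ℕ) (hk : kstar ≤ n)
    (hsuff : Sufficient f x ε (prefixSet n kstar))
    (hmin : ∀ k : ℕ, k < kstar → ¬ Sufficient f x ε (prefixSet n k)) :
    ∀ S' : Finset (Fin n), Sufficient f x ε S' → kstar ≤ S'.card := by
  intro S' hS'
  by_contra hlt
  push_neg at hlt
  set k := S'.card with hkdef
  have hkn : k ≤ n := by
    have := Finset.card_le_univ S'
    simpa [Finset.card_univ] using this
  -- minimizer points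
  have hmem : ∀ i, ∃ t ∈ Set.Icc (x i - ε) (x i + ε), g i t = m i := by
    intro i
    obtain ⟨t, ht, hgt⟩ := (hm i).1
    exact ⟨t, ht, hgt⟩
  choose t ht hgt using hmem
  have hmle : ∀ i (s : ℝ), s ∈ Set.Icc (x i - ε) (x i + ε) → m i ≤ g i s :=
    fun i s hs => (hm i).2 ⟨s, hs, rfl⟩
  -- characterization of sufficiency
  have key : ∀ S : Finset (Fin n), Sufficient f x ε S ↔
      0 ≤ β₀ + ((∑ i ∈ S, g i (x i)) + ∑ i ∈ Sᶜ, m i) := by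
    intro S
    have hsplit : ∀ xt : Fin n → ℝ,
        ∑ i, g i (patch S x xt i) = (∑ i ∈ S, g i (x i)) + ∑ i ∈ Sᶜ, g i (xt i) := by
      intro xt
      rw [← Finset.sum_add_sum_compl S]
      congr 1
      · exact Finset.sum_congr rfl fun i hi => by simp [patch, hi]
      · exact Finset.sum_congr rfl fun i hi => by
          simp only [Finset.mem_compl] at hi; simp [patch, hi]
    constructor
    · intro hS
      have harg : ∀ i, |x i - t i| ≤ ε := by
        intro i
        have := ht i
        rw [Set.mem_Icc] at this
        rw [abs_le]
        constructor <;> linarith [this.1, this.2]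
      have h1 := hS t harg
      rw [hfx, hf] at h1
      by_contra hneg
      push_neg at hneg
      have hsum : ∑ i, g i (patch S x t i) = (∑ i ∈ S, g i (x i)) + ∑ i ∈ Sᶜ, m i := by
        rw [hsplit]
        congr 1
        exact Finset.sum_congr rfl fun i _ => hgt i
      rw [hsum, if_neg (by linarith)] at h1
      exact absurd h1 (by decide)
    · intro h0 xt hxt
      rw [hfx, hf]
      have hge : ∀ i ∈ Sᶜ, m i ≤ g i (xt i) := by
        intro i _
        apply hmle i
        have := hxt i
        rw [abs_le] at this
        exact Set.mem_Icc.2 ⟨by linarith [this.1, this.2], by linarith [this.1, this.2]⟩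
      have : (∑ i ∈ S, g i (x i)) + ∑ i ∈ Sᶜ, m i ≤ ∑ i, g i (patch S x xt i) := by
        rw [hsplit]
        exact add_le_add_right (Finset.sum_le_sum hge) _
      rw [if_pos (by linarith)]
  -- Δ notation
  set Δ : Fin n → ℝ := fun i => g i (x i) - m i with hΔ
  have hident : ∀ S : Finset (Fin n),
      (∑ i ∈ S, g i (x i)) + ∑ i ∈ Sᶜ, m i = (∑ i, m i) + ∑ i ∈ S, Δ i := by
    intro S
    have h1 : ∑ i ∈ S, g i (x i) = (∑ i ∈ S, m i) + ∑ i ∈ S, Δ i := by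
      rw [← Finset.sum_add_distrib]
      exact Finset.sum_congr rfl fun i _ => by simp [hΔ]
    rw [h1]
    have h2 : (∑ i ∈ S, m i) + ∑ i ∈ Sᶜ, m i = ∑ i, m i := Finset.sum_add_sum_compl S m
    linarith
  -- sum of Δ over S' is at most sum over prefix k
  have hcomb : ∑ i ∈ S', Δ i ≤ ∑ i ∈ prefixSet n k, Δ i := by
    set e := S'.orderEmbOfFin hkdef.symm with he
    have hS'eq : S' = Finset.univ.map e.toEmbedding := by
      apply (Finset.eq_of_subset_of_card_le _ _).symm
      · intro i hi
        simp only [Finset.mem_map] at hi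
        obtain ⟨j, _, rfl⟩ := hi
        exact Finset.orderEmbOfFin_mem S' hkdef.symm j
      · simp [hkdef]
    have hpre : prefixSet n k = Finset.univ.map (Fin.castLEOrderEmb hkn).toEmbedding := by
      ext i
      simp only [prefixSet, Finset.mem_filter, Finset.mem_univ, true_and, Finset.mem_map]
      constructor
      · intro hik
        exact ⟨⟨(i : ℕ), hik⟩, by ext; simp [Fin.castLEOrderEmb]⟩
      · rintro ⟨j, rfl⟩
        simpa [Fin.castLEOrderEmb] using j.2
    rw [hS'eq, hpre, Finset.sum_map, Finset.sum_map]
    apply Finset.sum_le_sum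
    intro j _
    apply hsorted
    show (Fin.castLE hkn j) ≤ e j
    rw [Fin.le_def]
    simpa using aux_strictMono_le e.strictMono j
  -- conclude
  apply hmin k hlt
  rw [key]
  rw [hident]
  have h0 := (key S').1 hS'
  rw [hident] at h0
  linarith
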